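/- arXiv:1206.5343 — 3 statements merged into one kernel-verified Lean document; each statement's English description precedes it below -/
import Mathlib

section
/- For the weighted Kendall distance with weights w_i = φ(i,i+1) ≥ 0, the distance between any two permutations π and σ satisfies d_φ(π,σ) ≥ (1/2) ∑_{i=1}^n W(π⁻¹(i), σ⁻¹(i)), where W(a,b) = ∑_{l=min(a,b)}^{max(a,b)-1} w_l. -/
/-- The weighted Kendall distance: minimum total weight of a sequence of adjacent
transpositions transforming `σ` into `π`, where the adjacent transposition of positions
`i` and `i+1` (zero-indexed) has weight `w i`. -/
noncomputable def wk {n : ℕ} (w : ℕ → ℝ) (π σ : Equiv.Perm (Fin n)) : ℝ :=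
  sInf {c | ∃ L : List (Fin n), (∀ i ∈ L, (i : ℕ) + 1 < n) ∧
    σ * (L.map fun i => Equiv.swap i ⟨((i : ℕ) + 1) % n, Nat.mod_lt _ i.pos⟩).prod = π ∧
    c = (L.map fun i => w (i : ℕ)).sum}

/-- `W a b = ∑_{l=min(a,b)}^{max(a,b)-1} w_l`, the path weight between positions `a` and `b`. -/
def pathW (w : ℕ → ℝ) (a b : ℕ) : ℝ := ∑ l ∈ Finset.Ico (min a b) (max a b), w l

lemma pathW_self (w : ℕ → ℝ) (a : ℕ) : pathW w a a = 0 := by simp [pathW]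

lemma pathW_nonneg (w : ℕ → ℝ) (hw : ∀ l, 0 ≤ w l) (a b : ℕ) : 0 ≤ pathW w a b :=
  Finset.sum_nonneg fun l _ => hw l

lemma pathW_triangle (w : ℕ → ℝ) (hw : ∀ l, 0 ≤ w l) (a b c : ℕ) :
    pathW w a c ≤ pathW w a b + pathW w b c := by
  have hsub : Finset.Ico (min a c) (max a c) ⊆
      Finset.Ico (min a b) (max a b) ∪ Finset.Ico (min b c) (max b c) := by
    intro l hl
    simp only [Finset.mem_Ico, Finset.mem_union] at *
    omega
  have h1 : pathW w a c ≤
      ∑ l ∈ Finset.Ico (min a b) (max a b) ∪ Finset.Ico (min b c) (max b c), w l :=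
    Finset.sum_le_sum_of_subset_of_nonneg hsub (fun l _ _ => hw l)
  have h2 := Finset.sum_union_inter (s₁ := Finset.Ico (min a b) (max a b))
    (s₂ := Finset.Ico (min b c) (max b c)) (f := w)
  have h3 : 0 ≤ ∑ l ∈ Finset.Ico (min a b) (max a b) ∩ Finset.Ico (min b c) (max b c), w l :=
    Finset.sum_nonneg fun l _ => hw l
  unfold pathW at h1 ⊢
  linarith

/-- Each adjacent swap changes the footrule potential by at most `2 * w a`. -/
lemma key_lemma {n : ℕ} (w : ℕ → ℝ) (hw : ∀ l, 0 ≤ w l) :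
    ∀ L : List (Fin n), (∀ i ∈ L, (i : ℕ) + 1 < n) → ∀ σ : Equiv.Perm (Fin n),
    ∑ i : Fin n, pathW w
      ((((σ * (L.map fun i => Equiv.swap i ⟨((i : ℕ) + 1) % n, Nat.mod_lt _ i.pos⟩).prod))⁻¹ i
        : Fin n) : ℕ) ((σ⁻¹ i : Fin n) : ℕ) ≤ 2 * (L.map fun i => w (i : ℕ)).sum := by
  intro L
  induction L with
  | nil =>
    intro _ σ
    simp [pathW_self]
  | cons a L ih =>
    intro hL σ
    have ha : (a : ℕ) + 1 < n := hL a List.mem_cons_self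
    set a1 : Fin n := ⟨(a : ℕ) + 1, ha⟩ with ha1
    have hmod : (⟨((a : ℕ) + 1) % n, Nat.mod_lt _ a.pos⟩ : Fin n) = a1 := by
      ext; simp [Nat.mod_eq_of_lt ha, ha1]
    set s : Equiv.Perm (Fin n) := Equiv.swap a a1 with hs
    have hL' : ∀ i ∈ L, (i : ℕ) + 1 < n := fun i hi => hL i (List.mem_cons_of_mem _ hi)
    have hIH := ih hL' (σ * s)
    have hane : a ≠ a1 := by
      intro h
      have := congrArg (Fin.val) h
      simp [ha1] at this
    -- the swap sum
    have hswapsum : ∑ j : Fin n, pathW w ((s j : Fin n) : ℕ) (j : ℕ) = 2 * w (a : ℕ) := by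
      rw [Finset.sum_eq_add_of_mem a a1 (Finset.mem_univ _) (Finset.mem_univ _) hane ?_]
      · have h1 : s a = a1 := Equiv.swap_apply_left _ _
        have h2 : s a1 = a := Equiv.swap_apply_right _ _
        rw [h1, h2]
        have : pathW w ((a1 : Fin n) : ℕ) (a : ℕ) = w (a : ℕ) := by
          simp [pathW, ha1, Nat.min_def, Nat.max_def, Finset.sum_Ico_eq_sum_range]
        have h4 : pathW w (a : ℕ) ((a1 : Fin n) : ℕ) = w (a : ℕ) := by
          simp [pathW, ha1, Nat.min_def, Nat.max_def, Finset.sum_Ico_eq_sum_range]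
        rw [this, h4]; ring
      · intro k _ hk
        have : s k = k := Equiv.swap_apply_of_ne_of_ne hk.1 hk.2
        rw [this, pathW_self]
    -- reindex
    have hreindex : ∑ i : Fin n, pathW w ((s (σ⁻¹ i) : Fin n) : ℕ) ((σ⁻¹ i : Fin n) : ℕ)
        = ∑ j : Fin n, pathW w ((s j : Fin n) : ℕ) (j : ℕ) :=
      Equiv.sum_comp σ⁻¹ (fun j => pathW w ((s j : Fin n) : ℕ) (j : ℕ))
    calc ∑ i : Fin n, pathW w
          ((((σ * ((a :: L).map fun i =>
              Equiv.swap i ⟨((i : ℕ) + 1) % n, Nat.mod_lt _ i.pos⟩).prod))⁻¹ i : Fin n) : ℕ)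
          ((σ⁻¹ i : Fin n) : ℕ)
        ≤ ∑ i : Fin n, (pathW w
          ((((σ * s * (L.map fun i =>
              Equiv.swap i ⟨((i : ℕ) + 1) % n, Nat.mod_lt _ i.pos⟩).prod))⁻¹ i : Fin n) : ℕ)
          (((σ * s)⁻¹ i : Fin n) : ℕ) + pathW w (((σ * s)⁻¹ i : Fin n) : ℕ)
          ((σ⁻¹ i : Fin n) : ℕ)) := by
          apply Finset.sum_le_sum
          intro i _
          have hrw : σ * ((a :: L).map fun i =>
              Equiv.swap i ⟨((i : ℕ) + 1) % n, Nat.mod_lt _ i.pos⟩).prod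
              = σ * s * (L.map fun i =>
              Equiv.swap i ⟨((i : ℕ) + 1) % n, Nat.mod_lt _ i.pos⟩).prod := by
            rw [List.map_cons, List.prod_cons, hmod, ← mul_assoc]
          rw [hrw]
          exact pathW_triangle w hw _ _ _
      _ = (∑ i : Fin n, pathW w
          ((((σ * s * (L.map fun i =>
              Equiv.swap i ⟨((i : ℕ) + 1) % n, Nat.mod_lt _ i.pos⟩).prod))⁻¹ i : Fin n) : ℕ)
          (((σ * s)⁻¹ i : Fin n) : ℕ)) + ∑ i : Fin n, pathW w (((σ * s)⁻¹ i : Fin n) : ℕ)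
          ((σ⁻¹ i : Fin n) : ℕ) := Finset.sum_add_distrib
      _ ≤ 2 * (L.map fun i => w (i : ℕ)).sum + 2 * w (a : ℕ) := by
          apply add_le_add hIH
          have hss : ∀ i : Fin n, (σ * s)⁻¹ i = s (σ⁻¹ i) := by
            intro i
            rw [mul_inv_rev]
            simp [hs]
          have heq : ∑ i : Fin n, pathW w (((σ * s)⁻¹ i : Fin n) : ℕ) ((σ⁻¹ i : Fin n) : ℕ)
              = 2 * w (a : ℕ) := by
            rw [show (∑ i : Fin n, pathW w (((σ * s)⁻¹ i : Fin n) : ℕ) ((σ⁻¹ i : Fin n) : ℕ))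
                = ∑ i : Fin n, pathW w ((s (σ⁻¹ i) : Fin n) : ℕ) ((σ⁻¹ i : Fin n) : ℕ) from
              Finset.sum_congr rfl fun i _ => by rw [hss], hreindex, hswapsum]
          exact le_of_eq heq
      _ = 2 * ((a :: L).map fun i => w (i : ℕ)).sum := by
          simp [List.map_cons, List.sum_cons]; ring

/-- The defining set of `wk` is nonempty. -/
lemma wk_set_nonempty {n : ℕ} (w : ℕ → ℝ) (π σ : Equiv.Perm (Fin n)) :
    Set.Nonempty {c | ∃ L : List (Fin n), (∀ i ∈ L, (i : ℕ) + 1 < n) ∧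
      σ * (L.map fun i => Equiv.swap i ⟨((i : ℕ) + 1) % n, Nat.mod_lt _ i.pos⟩).prod = π ∧
      c = (L.map fun i => w (i : ℕ)).sum} := by
  suffices h : ∃ L : List (Fin n), (∀ i ∈ L, (i : ℕ) + 1 < n) ∧
      (L.map fun i => Equiv.swap i ⟨((i : ℕ) + 1) % n, Nat.mod_lt _ i.pos⟩).prod = σ⁻¹ * π by
    obtain ⟨L, h1, h2⟩ := h
    exact ⟨(L.map fun i => w (i : ℕ)).sum, L, h1, by rw [h2]; group, rfl⟩
  match n with
  | 0 =>
    exact ⟨[], by simp, Subsingleton.elim _ _⟩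
  | (m + 1) =>
    suffices h : ∀ τ : Equiv.Perm (Fin (m + 1)), ∃ L : List (Fin (m + 1)),
        (∀ i ∈ L, (i : ℕ) + 1 < m + 1) ∧
        (L.map fun i => Equiv.swap i ⟨((i : ℕ) + 1) % (m + 1),
          Nat.mod_lt _ i.pos⟩).prod = τ from h _
    intro τ
    have hmem : τ ∈ Submonoid.closure
        (Set.range fun i : Fin m ↦ Equiv.swap i.castSucc i.succ) := by
      rw [Equiv.Perm.mclosure_swap_castSucc_succ m]; trivial
    induction hmem using Submonoid.closure_induction with
    | mem x hx =>
      obtain ⟨i, rfl⟩ := hx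
      refine ⟨[i.castSucc], ?_, ?_⟩
      · intro j hj
        simp only [List.mem_singleton] at hj
        subst hj
        simp [Fin.is_lt]
      · simp only [List.map_singleton, List.prod_singleton]
        congr 1
        ext
        simp [Fin.val_succ, Nat.mod_eq_of_lt (by omega : (i : ℕ) + 1 < m + 1)]
    | one => exact ⟨[], by simp, by simp⟩
    | mul x y hx hy ihx ihy =>
      obtain ⟨L1, h1, h1'⟩ := ihx
      obtain ⟨L2, h2, h2'⟩ := ihy
      refine ⟨L1 ++ L2, ?_, ?_⟩
      · intro i hi
        rcases List.mem_append.mp hi with h | h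
        · exact h1 i h
        · exact h2 i h
      · rw [List.map_append, List.prod_append, h1', h2']

/-- lower bound for the weighted Kendall distance by half the
generalized Spearman footrule. -/
theorem stmt_7 {n : ℕ} (w : ℕ → ℝ) (hw : ∀ l, 0 ≤ w l) (π σ : Equiv.Perm (Fin n)) :
    (1 / 2) * ∑ i : Fin n, pathW w ((π⁻¹ i : Fin n) : ℕ) ((σ⁻¹ i : Fin n) : ℕ) ≤ wk w π σ := by
  apply le_csInf (wk_set_nonempty w π σ)
  rintro c ⟨L, hL, hprod, rfl⟩
  have := key_lemma w hw L hL σ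
  rw [hprod] at this
  linarith
end

section
/- For any nonnegative weight function φ on transpositions, the weighted transposition distance satisfies (1/2) D(π,σ) ≤ d_φ(π,σ) ≤ 2 D(π,σ), where D(π,σ) = ∑_{i=1}^n weight(p*(π⁻¹(i), σ⁻¹(i))) and p*(a,b) is the shortest path between a and b in the complete graph on [n] with edge weights φ(i,j). -/
open Equiv Finset


/-- The weighted transposition distance: minimum total weight of a sequence of
transpositions transforming `σ` into `π`, with weight `φ a b` for the transposition `(a b)`. -/
noncomputable def wtd {n : ℕ} (φ : Fin n → Fin n → ℝ) (π σ : Equiv.Perm (Fin n)) : ℝ :=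
  sInf {c | ∃ L : List (Fin n × Fin n), (∀ p ∈ L, p.1 ≠ p.2) ∧
    σ * (L.map fun p => Equiv.swap p.1 p.2).prod = π ∧
    c = (L.map fun p => φ p.1 p.2).sum}


/-- Shortest-path distance between `a` and `b` in the complete graph on `[n]`
with edge weights `φ` (zero if `a = b`, via the empty path). -/
noncomputable def eta {n : ℕ} (φ : Fin n → Fin n → ℝ) (a b : Fin n) : ℝ :=
  sInf {c | ∃ L : List (Fin n), (a :: L).getLast (by simp) = b ∧
    c = (((a :: L).zip L).map fun p => φ p.1 p.2).sum}

variable {n : ℕ}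

/-- Path weight of a list of vertices. -/
noncomputable def pw (φ : Fin n → Fin n → ℝ) : List (Fin n) → ℝ
  | [] => 0
  | [_] => 0
  | a :: b :: l => φ a b + pw φ (b :: l)

lemma pw_nonneg (φ : Fin n → Fin n → ℝ) (hφ : ∀ a b, 0 ≤ φ a b) :
    ∀ L : List (Fin n), 0 ≤ pw φ L
  | [] => le_refl 0
  | [_] => le_refl 0
  | a :: b :: l => add_nonneg (hφ a b) (pw_nonneg φ hφ (b :: l))

lemma pw_eq (φ : Fin n → Fin n → ℝ) :
    ∀ (L : List (Fin n)) (a : Fin n),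
      (((a :: L).zip L).map fun p => φ p.1 p.2).sum = pw φ (a :: L)
  | [], a => by simp [pw]
  | b :: l, a => by
      rw [show (a :: b :: l).zip (b :: l) = (a, b) :: ((b :: l).zip l) from rfl]
      simp only [List.map_cons, List.sum_cons, pw]
      rw [pw_eq φ l b]

lemma pw_append_single (φ : Fin n → Fin n → ℝ) :
    ∀ (L : List (Fin n)) (a c b : Fin n),
      (a :: L).getLast (by simp) = c →
      pw φ ((a :: L) ++ [b]) = pw φ (a :: L) + φ c b
  | [], a, c, b, h => by
      simp at h; subst h; simp [pw]
  | v :: rest, a, c, b, h => by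
      have h' : (v :: rest).getLast (by simp) = c := by
        rwa [List.getLast_cons (by simp)] at h
      have := pw_append_single φ rest v c b h'
      show φ a v + pw φ ((v :: rest) ++ [b]) = pw φ (a :: v :: rest) + φ c b
      rw [this]
      show _ = φ a v + pw φ (v :: rest) + φ c b
      ring

def etaSet (φ : Fin n → Fin n → ℝ) (a b : Fin n) : Set ℝ :=
  {c | ∃ L : List (Fin n), (a :: L).getLast (by simp) = b ∧ c = pw φ (a :: L)}

lemma eta_eq (φ : Fin n → Fin n → ℝ) (a b : Fin n) :
    eta φ a b = sInf (etaSet φ a b) := by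
  unfold eta etaSet
  congr 1
  ext c
  exact exists_congr fun L => and_congr_right fun _ => by rw [pw_eq]

lemma etaSet_nonempty (φ : Fin n → Fin n → ℝ) (a b : Fin n) :
    (etaSet φ a b).Nonempty :=
  ⟨pw φ [a, b], [b], by simp, rfl⟩

lemma etaSet_mem_nonneg (φ : Fin n → Fin n → ℝ) (hφ : ∀ a b, 0 ≤ φ a b)
    (a b : Fin n) : ∀ c ∈ etaSet φ a b, 0 ≤ c := by
  rintro c ⟨L, -, rfl⟩
  exact pw_nonneg φ hφ _

lemma etaSet_bddBelow (φ : Fin n → Fin n → ℝ) (hφ : ∀ a b, 0 ≤ φ a b)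
    (a b : Fin n) : BddBelow (etaSet φ a b) :=
  ⟨0, fun c hc => etaSet_mem_nonneg φ hφ a b c hc⟩

lemma eta_le_pw (φ : Fin n → Fin n → ℝ) (hφ : ∀ a b, 0 ≤ φ a b)
    {a b : Fin n} {L : List (Fin n)} (h : (a :: L).getLast (by simp) = b) :
    eta φ a b ≤ pw φ (a :: L) := by
  rw [eta_eq]
  exact csInf_le (etaSet_bddBelow φ hφ a b) ⟨L, h, rfl⟩

lemma eta_nonneg (φ : Fin n → Fin n → ℝ) (hφ : ∀ a b, 0 ≤ φ a b)
    (a b : Fin n) : 0 ≤ eta φ a b := by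
  rw [eta_eq]
  exact le_csInf (etaSet_nonempty φ a b) (etaSet_mem_nonneg φ hφ a b)

lemma eta_self (φ : Fin n → Fin n → ℝ) (hφ : ∀ a b, 0 ≤ φ a b)
    (a : Fin n) : eta φ a a = 0 := by
  refine le_antisymm ?_ (eta_nonneg φ hφ a a)
  have := eta_le_pw φ hφ (a := a) (b := a) (L := []) (by simp)
  simpa [pw] using this

lemma eta_le_phi (φ : Fin n → Fin n → ℝ) (hφ : ∀ a b, 0 ≤ φ a b)
    (a b : Fin n) : eta φ a b ≤ φ a b := by
  have := eta_le_pw φ hφ (a := a) (b := b) (L := [b]) (by simp)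
  simpa [pw] using this

lemma eta_step (φ : Fin n → Fin n → ℝ) (hφ : ∀ a b, 0 ≤ φ a b)
    (x a b : Fin n) : eta φ x b ≤ eta φ x a + φ a b := by
  rw [eta_eq φ x a, eta_eq φ x b]
  have key : ∀ c ∈ etaSet φ x a, sInf (etaSet φ x b) ≤ c + φ a b := by
    rintro c ⟨L, hL, rfl⟩
    refine csInf_le (etaSet_bddBelow φ hφ x b) ⟨L ++ [b], ?_, ?_⟩
    · simp
    · show _ = pw φ ((x :: L) ++ [b])
      rw [pw_append_single φ L x a b hL]
  have : sInf (etaSet φ x b) - φ a b ≤ sInf (etaSet φ x a) := by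
    refine le_csInf (etaSet_nonempty φ x a) fun c hc => ?_
    linarith [key c hc]
  linarith

lemma eta_exists_path (φ : Fin n → Fin n → ℝ) (a b : Fin n) {ε : ℝ} (hε : 0 < ε) :
    ∃ L : List (Fin n), (a :: L).getLast (by simp) = b ∧
      pw φ (a :: L) < eta φ a b + ε := by
  rw [eta_eq]
  obtain ⟨c, ⟨L, hL, rfl⟩, hlt⟩ := Real.lt_sInf_add_pos (etaSet_nonempty φ a b) hε
  exact ⟨L, hL, hlt⟩

lemma sim_swap (φ : Fin n → Fin n → ℝ) (hφ : ∀ a b, 0 ≤ φ a b) :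
    ∀ (L : List (Fin n)) (a b : Fin n), a ≠ b →
      (a :: L).getLast (by simp) = b →
      ∃ M : List (Fin n × Fin n), (∀ p ∈ M, p.1 ≠ p.2) ∧
        (M.map fun p => Equiv.swap p.1 p.2).prod = Equiv.swap a b ∧
        (M.map fun p => φ p.1 p.2).sum ≤ 2 * pw φ (a :: L)
  | [], a, b, hab, h => absurd (by simpa using h) hab
  | v :: rest, a, b, hab, h => by
    have h' : (v :: rest).getLast (by simp) = b := by
      rwa [List.getLast_cons (by simp)] at h
    have hpw : pw φ (a :: v :: rest) = φ a v + pw φ (v :: rest) := rfl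
    have hrest0 : 0 ≤ pw φ (v :: rest) := pw_nonneg φ hφ _
    by_cases hva : v = a
    · subst hva
      obtain ⟨M, hM1, hM2, hM3⟩ := sim_swap φ hφ rest v b hab h'
      exact ⟨M, hM1, hM2, by rw [hpw]; linarith [hφ v v]⟩
    · by_cases hvb : v = b
      · subst hvb
        refine ⟨[(a, v)], by simp [hab], by simp, ?_⟩
        simp only [List.map_cons, List.map_nil, List.sum_cons, List.sum_nil, add_zero, hpw]
        linarith [hφ a v]
      · obtain ⟨M, hM1, hM2, hM3⟩ := sim_swap φ hφ rest v b hvb h'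
        refine ⟨(a, v) :: M ++ [(a, v)], ?_, ?_, ?_⟩
        · intro p hp
          rcases List.mem_cons.1 hp with h0 | h0
          · subst h0; exact fun e => hva e.symm
          rcases List.mem_append.1 h0 with h1 | h1
          · exact hM1 p h1
          · simp at h1; subst h1; exact fun e => hva e.symm
        · simp only [List.map_cons, List.map_append, List.prod_cons, List.prod_append,
            List.map_nil, List.prod_nil, List.prod_cons, mul_one, hM2]
          have key := Equiv.swap_mul_swap_mul_swap (x := b) (y := v) (z := a)
            (fun e => hvb e.symm) (fun e => hab e.symm)
          rw [Equiv.swap_comm v a, Equiv.swap_comm b v] at key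
          exact key
        · simp only [List.map_cons, List.map_append, List.sum_cons, List.sum_append,
            List.map_nil, List.sum_nil, add_zero, hpw]
          linarith

lemma sum_split_two {f : Fin n → ℝ} {a c : Fin n} (hac : a ≠ c) :
    ∑ j, f j = f a + f c + ∑ j ∈ (Finset.univ.erase a).erase c, f j := by
  rw [← Finset.add_sum_erase _ f (Finset.mem_univ a)]
  rw [← Finset.add_sum_erase _ f (Finset.mem_erase.2 ⟨hac.symm, Finset.mem_univ c⟩)]
  ring

lemma sum_eq_off_two {f g : Fin n → ℝ} {a c : Fin n} (hac : a ≠ c)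
    (h : ∀ j, j ≠ a → j ≠ c → f j = g j) :
    ∑ j, f j = f a + f c - g a - g c + ∑ j, g j := by
  rw [sum_split_two (f := f) hac, sum_split_two (f := g) hac]
  have : ∑ j ∈ (Finset.univ.erase a).erase c, f j
      = ∑ j ∈ (Finset.univ.erase a).erase c, g j := by
    refine Finset.sum_congr rfl fun j hj => ?_
    have hj1 := (Finset.mem_erase.1 hj).1
    have hj2 := (Finset.mem_erase.1 (Finset.mem_erase.1 hj).2).1
    exact h j hj2 hj1
  rw [this]; ring

lemma lower_aux (φ : Fin n → Fin n → ℝ) (hφ : ∀ a b, 0 ≤ φ a b)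
    (hφsymm : ∀ a b, φ a b = φ b a) (π : Perm (Fin n)) :
    ∀ (L : List (Fin n × Fin n)) (σ : Perm (Fin n)), (∀ p ∈ L, p.1 ≠ p.2) →
      σ * (L.map fun p => Equiv.swap p.1 p.2).prod = π →
      ∑ i, eta φ (π⁻¹ i) (σ⁻¹ i) ≤ 2 * (L.map fun p => φ p.1 p.2).sum
  | [], σ, _, hprod => by
      simp only [List.map_nil, List.prod_nil, mul_one] at hprod
      subst hprod
      simp only [List.map_nil, List.sum_nil, mul_zero]
      rw [Finset.sum_congr rfl fun i _ => eta_self φ hφ (σ⁻¹ i)]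
      simp
  | (a, b) :: L', σ, hvalid, hprod => by
      have hab : a ≠ b := hvalid (a, b) List.mem_cons_self
      have hprod' : (σ * Equiv.swap a b) * (L'.map fun p => Equiv.swap p.1 p.2).prod = π := by
        rw [mul_assoc]
        simpa using hprod
      have IH := lower_aux φ hφ hφsymm π L' (σ * Equiv.swap a b)
        (fun p hp => hvalid p (List.mem_cons_of_mem _ hp)) hprod'
      have hinv : ∀ i, (σ * Equiv.swap a b)⁻¹ i = Equiv.swap a b (σ⁻¹ i) := by
        intro i
        simp [mul_inv_rev, Equiv.Perm.mul_apply]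
      have hpt : ∀ i : Fin n, eta φ (π⁻¹ i) (σ⁻¹ i) ≤
          eta φ (π⁻¹ i) ((σ * Equiv.swap a b)⁻¹ i) +
            (if i = σ a ∨ i = σ b then φ a b else 0) := by
        intro i
        rw [hinv i]
        by_cases hia : i = σ a
        · subst hia
          simp only [Perm.inv_def, Equiv.symm_apply_apply, Equiv.swap_apply_left, eq_self_iff_true,
            true_or, if_true]
          calc eta φ (π⁻¹ (σ a)) a ≤ eta φ (π⁻¹ (σ a)) b + φ b a :=
                eta_step φ hφ _ b a
            _ = eta φ (π⁻¹ (σ a)) b + φ a b := by rw [hφsymm]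
        · by_cases hib : i = σ b
          · subst hib
            simp only [Perm.inv_def, Equiv.symm_apply_apply, Equiv.swap_apply_right, eq_self_iff_true,
              or_true, if_true]
            exact eta_step φ hφ _ a b
          · have h1 : σ⁻¹ i ≠ a := fun e => hia (by rw [← e]; simp)
            have h2 : σ⁻¹ i ≠ b := fun e => hib (by rw [← e]; simp)
            rw [Equiv.swap_apply_of_ne_of_ne h1 h2, if_neg (by tauto)]
            simp
      have hsum := Finset.sum_le_sum fun i (_ : i ∈ Finset.univ) => hpt i
      rw [Finset.sum_add_distrib] at hsum
      have hind : ∑ i : Fin n, (if i = σ a ∨ i = σ b then φ a b else 0) = 2 * φ a b := by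
        have hσab : σ a ≠ σ b := fun e => hab (σ.injective e)
        have : ∀ i : Fin n, (if i = σ a ∨ i = σ b then φ a b else 0)
            = if i ∈ ({σ a, σ b} : Finset (Fin n)) then φ a b else 0 := by
          intro i; simp [Finset.mem_insert]
        rw [Finset.sum_congr rfl fun i _ => this i, Finset.sum_ite_mem,
          Finset.univ_inter, Finset.sum_pair hσab]
        ring
      simp only [List.map_cons, List.sum_cons]
      rw [hind] at hsum
      linarith

lemma exists_swap_list (f : Perm (Fin n)) :
    ∃ L : List (Fin n × Fin n), (∀ p ∈ L, p.1 ≠ p.2) ∧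
      (L.map fun p => Equiv.swap p.1 p.2).prod = f := by
  refine Equiv.Perm.swap_induction_on f ⟨[], by simp, by simp⟩ ?_
  rintro f x y hxy ⟨L, h1, h2⟩
  refine ⟨(x, y) :: L, ?_, by simp [h2]⟩
  intro p hp
  rcases List.mem_cons.1 hp with h | h
  · subst h; exact hxy
  · exact h1 p h

lemma upper_aux (φ : Fin n → Fin n → ℝ) (hφ : ∀ a b, 0 ≤ φ a b) :
    ∀ k : ℕ, ∀ τ : Perm (Fin n), τ.support.card ≤ k → ∀ a : Fin n, τ a ≠ a →
      ∀ ε : ℝ, 0 < ε →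
      ∃ L : List (Fin n × Fin n), (∀ p ∈ L, p.1 ≠ p.2) ∧
        (L.map fun p => Equiv.swap p.1 p.2).prod = τ ∧
        (L.map fun p => φ p.1 p.2).sum ≤
          2 * (∑ j, eta φ j (τ j)) - 2 * eta φ (τ⁻¹ a) a + ε := by
  intro k
  induction k with
  | zero =>
    intro τ hcard a ha ε hε
    exact absurd (Equiv.Perm.card_support_eq_zero.1 (Nat.le_zero.1 hcard) ▸ ha)
      (by simp [Equiv.Perm.card_support_eq_zero.1 (Nat.le_zero.1 hcard)])
  | succ k IH =>
    intro τ hcard a ha ε hε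
    set b := τ a with hb
    have hab : a ≠ b := fun e => ha e.symm
    set τ' := Equiv.swap a b * τ with hτ'
    have hτ'a : τ' a = a := by
      rw [hτ', Equiv.Perm.mul_apply, ← hb, Equiv.swap_apply_right]
    have hdecomp : Equiv.swap a b * τ' = τ := by
      rw [hτ', ← mul_assoc, Equiv.swap_mul_self, one_mul]
    -- support facts
    have hτb : τ b ≠ b := fun e => hab (τ.injective (hb ▸ e.symm))
    have hsupp : τ'.support ⊆ τ.support.erase a := by
      intro j hj
      rw [Equiv.Perm.mem_support] at hj
      refine Finset.mem_erase.2 ⟨fun e => hj (e ▸ hτ'a), Equiv.Perm.mem_support.2 fun e => ?_⟩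
      -- τ j = j implies τ' j = j
      apply hj
      have hja : j ≠ a := fun e' => ha (show τ a = a by rw [← e']; exact e)
      have hjb : j ≠ b := fun e' => hτb (by rw [← e']; exact e)
      rw [hτ', Equiv.Perm.mul_apply, e, Equiv.swap_apply_of_ne_of_ne hja hjb]
    have hcard' : τ'.support.card ≤ k := by
      have h1 := Finset.card_le_card hsupp
      have h2 : a ∈ τ.support := Equiv.Perm.mem_support.2 ha
      rw [Finset.card_erase_of_mem h2] at h1
      omega
    -- simulate swap a b
    obtain ⟨P, hP1, hP2⟩ := eta_exists_path φ a b (by positivity : (0:ℝ) < ε / 4)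
    obtain ⟨M₀, hM01, hM02, hM03⟩ := sim_swap φ hφ P a b hab hP1
    have hM0cost : (M₀.map fun p => φ p.1 p.2).sum ≤ 2 * eta φ a b + ε / 2 := by
      linarith
    by_cases h2c : τ b = a
    · -- 2-cycle case
      have hτinv : τ⁻¹ a = b := by
        rw [← h2c]; simp
      have hτ'b : τ' b = b := by
        rw [hτ', Equiv.Perm.mul_apply, h2c, Equiv.swap_apply_left]
      have hoff : ∀ j, j ≠ a → j ≠ b → τ' j = τ j := by
        intro j hja hjb
        have h1 : τ j ≠ a := fun e => hjb (by rw [← hτinv, ← e]; simp)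
        have h2 : τ j ≠ b := fun e => hja (τ.injective (e.trans hb))
        rw [hτ', Equiv.Perm.mul_apply, Equiv.swap_apply_of_ne_of_ne h1 h2]
      -- get L' for τ'
      have hL' : ∃ L' : List (Fin n × Fin n), (∀ p ∈ L', p.1 ≠ p.2) ∧
          (L'.map fun p => Equiv.swap p.1 p.2).prod = τ' ∧
          (L'.map fun p => φ p.1 p.2).sum ≤ 2 * (∑ j, eta φ j (τ' j)) + ε / 2 := by
        by_cases hone : τ' = 1
        · refine ⟨[], by simp, by simp [hone], ?_⟩
          have : 0 ≤ ∑ j, eta φ j (τ' j) :=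
            Finset.sum_nonneg fun j _ => eta_nonneg φ hφ _ _
          simp only [List.map_nil, List.sum_nil]
          linarith
        · obtain ⟨a'', ha''⟩ : ∃ x, τ' x ≠ x := by
            by_contra hc
            push_neg at hc
            exact hone (Equiv.ext hc)
          obtain ⟨L', h1, h2, h3⟩ := IH τ' hcard' a'' ha'' (ε / 2) (by positivity)
          refine ⟨L', h1, h2, ?_⟩
          have := eta_nonneg φ hφ (τ'⁻¹ a'') a''
          linarith
      obtain ⟨L', hL'1, hL'2, hL'3⟩ := hL'
      refine ⟨M₀ ++ L', ?_, ?_, ?_⟩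
      · intro p hp
        rcases List.mem_append.1 hp with h | h
        · exact hM01 p h
        · exact hL'1 p h
      · rw [List.map_append, List.prod_append, hM02, hL'2, hdecomp]
      · rw [List.map_append, List.sum_append]
        have hsum : ∑ j, eta φ j (τ j) =
            eta φ a (τ a) + eta φ b (τ b) - eta φ a (τ' a) - eta φ b (τ' b) +
              ∑ j, eta φ j (τ' j) := by
          exact sum_eq_off_two (f := fun j => eta φ j (τ j))
            (g := fun j => eta φ j (τ' j)) hab
            (fun j hja hjb => congrArg (eta φ j) (hoff j hja hjb).symm)
        rw [hτ'a, hτ'b, eta_self φ hφ a, eta_self φ hφ b, ← hb, h2c] at hsum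
        rw [hτinv]
        have hba : eta φ b a = eta φ b a := rfl
        linarith
    · -- not a 2-cycle
      set c := τ⁻¹ a with hc
      have hτc : τ c = a := by rw [hc]; simp
      have hca : c ≠ a := fun e => ha ((congrArg τ e).symm.trans hτc)
      have hcb : c ≠ b := fun e => h2c (show τ b = a by rw [← e]; exact hτc)
      have hτ'b : τ' b ≠ b := by
        have h1 : τ b ≠ a := h2c
        rw [hτ', Equiv.Perm.mul_apply, Equiv.swap_apply_of_ne_of_ne h1 hτb]
        exact hτb
      have hτ'c : τ' c = b := by
        rw [hτ', Equiv.Perm.mul_apply, hτc, Equiv.swap_apply_left]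
      have hτ'invb : τ'⁻¹ b = c := by
        rw [← hτ'c]; simp
      have hoff : ∀ j, j ≠ a → j ≠ c → τ' j = τ j := by
        intro j hja hjc
        have h1 : τ j ≠ a := fun e => hjc (by rw [hc, ← e]; simp)
        have h2 : τ j ≠ b := fun e => hja (τ.injective (e.trans hb))
        rw [hτ', Equiv.Perm.mul_apply, Equiv.swap_apply_of_ne_of_ne h1 h2]
      obtain ⟨L', hL'1, hL'2, hL'3⟩ := IH τ' hcard' b hτ'b (ε / 2) (by positivity)
      rw [hτ'invb] at hL'3
      refine ⟨M₀ ++ L', ?_, ?_, ?_⟩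
      · intro p hp
        rcases List.mem_append.1 hp with h | h
        · exact hM01 p h
        · exact hL'1 p h
      · rw [List.map_append, List.prod_append, hM02, hL'2, hdecomp]
      · rw [List.map_append, List.sum_append]
        have hsum : ∑ j, eta φ j (τ j) =
            eta φ a (τ a) + eta φ c (τ c) - eta φ a (τ' a) - eta φ c (τ' c) +
              ∑ j, eta φ j (τ' j) := by
          exact sum_eq_off_two (f := fun j => eta φ j (τ j))
            (g := fun j => eta φ j (τ' j)) hca.symm
            (fun j hja hjc => congrArg (eta φ j) (hoff j hja hjc).symm)
        rw [hτ'a, hτ'c, eta_self φ hφ a, hτc, ← hb] at hsum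
        linarith

lemma wtd_bddBelow (φ : Fin n → Fin n → ℝ) (hφ : ∀ a b, 0 ≤ φ a b)
    (π σ : Perm (Fin n)) :
    BddBelow {c | ∃ L : List (Fin n × Fin n), (∀ p ∈ L, p.1 ≠ p.2) ∧
      σ * (L.map fun p => Equiv.swap p.1 p.2).prod = π ∧
      c = (L.map fun p => φ p.1 p.2).sum} := by
  refine ⟨0, ?_⟩
  rintro c ⟨L, -, -, rfl⟩
  refine List.sum_nonneg ?_
  rintro x hx
  obtain ⟨p, -, rfl⟩ := List.mem_map.1 hx
  exact hφ _ _

/-- for any nonnegative symmetric weight function `φ`,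
`(1/2) D(π,σ) ≤ d_φ(π,σ) ≤ 2 D(π,σ)`, where `D` is the generalized Spearman footrule
built from shortest-path distances. -/
theorem stmt_9 {n : ℕ} (φ : Fin n → Fin n → ℝ) (hφ : ∀ a b, 0 ≤ φ a b)
    (hφsymm : ∀ a b, φ a b = φ b a) (π σ : Equiv.Perm (Fin n)) :
    (1 / 2) * (∑ i : Fin n, eta φ (π⁻¹ i) (σ⁻¹ i)) ≤ wtd φ π σ ∧
    wtd φ π σ ≤ 2 * (∑ i : Fin n, eta φ (π⁻¹ i) (σ⁻¹ i)) := by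
  have hne : {c | ∃ L : List (Fin n × Fin n), (∀ p ∈ L, p.1 ≠ p.2) ∧
      σ * (L.map fun p => Equiv.swap p.1 p.2).prod = π ∧
      c = (L.map fun p => φ p.1 p.2).sum}.Nonempty := by
    obtain ⟨L0, h1, h2⟩ := exists_swap_list (σ⁻¹ * π)
    exact ⟨(L0.map fun p => φ p.1 p.2).sum, L0, h1, by rw [h2, mul_inv_cancel_left], rfl⟩
  constructor
  · -- lower bound
    rw [wtd]
    refine le_csInf hne ?_
    rintro c ⟨L, hv, hp, rfl⟩
    have := lower_aux φ hφ hφsymm π L σ hv hp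
    linarith
  · -- upper bound
    have hreindex : ∑ i : Fin n, eta φ (π⁻¹ i) (σ⁻¹ i)
        = ∑ j : Fin n, eta φ j ((σ⁻¹ * π) j) := by
      rw [← Equiv.sum_comp π (fun i => eta φ (π⁻¹ i) (σ⁻¹ i))]
      refine Finset.sum_congr rfl fun j _ => ?_
      simp [Equiv.Perm.mul_apply]
    rw [hreindex]
    by_cases hτ : σ⁻¹ * π = 1
    · have hπσ : π = σ := by
        have := congrArg (fun x => σ * x) hτ
        simpa [← mul_assoc] using this
      have h0 : wtd φ π σ ≤ 0 := by
        rw [wtd]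
        exact csInf_le (wtd_bddBelow φ hφ π σ) ⟨[], by simp, by simp [hπσ], by simp⟩
      have h1 : ∑ j : Fin n, eta φ j ((σ⁻¹ * π) j) = 0 := by
        rw [hτ]
        rw [Finset.sum_congr rfl fun j _ => by
          simpa using eta_self φ hφ j]
        simp
      rw [h1]
      linarith
    · obtain ⟨a, ha⟩ : ∃ x, (σ⁻¹ * π) x ≠ x := by
        by_contra hc
        push_neg at hc
        exact hτ (Equiv.ext hc)
      refine le_of_forall_pos_le_add ?_
      intro ε hε
      obtain ⟨L, h1, h2, h3⟩ := upper_aux φ hφ ((σ⁻¹ * π).support.card) (σ⁻¹ * π)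
        le_rfl a ha ε hε
      have hmem : (L.map fun p => φ p.1 p.2).sum ∈ {c | ∃ L : List (Fin n × Fin n),
          (∀ p ∈ L, p.1 ≠ p.2) ∧
          σ * (L.map fun p => Equiv.swap p.1 p.2).prod = π ∧
          c = (L.map fun p => φ p.1 p.2).sum} :=
        ⟨L, h1, by rw [h2, mul_inv_cancel_left], rfl⟩
      have hwle : wtd φ π σ ≤ (L.map fun p => φ p.1 p.2).sum := by
        rw [wtd]
        exact csInf_le (wtd_bddBelow φ hφ π σ) hmem
      have hη := eta_nonneg φ hφ ((σ⁻¹ * π)⁻¹ a) a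
      linarith
end

section
/- The shortest-path distance η(a,b) in the complete graph on [n] with nonnegative symmetric edge weights φ satisfies: d_φ((a b), e) ≤ 2 η(a,b) − φ(a',b') for some edge (a',b') on a shortest path, and in particular the weighted transposition distance of a single transposition satisfies d_φ((a b), e) ≤ 2 η(a,b). -/
namespace Stmt15Aux

variable {n : ℕ}

/-- Cost of a path given as full vertex list. -/
noncomputable def pcost (φ : Fin n → Fin n → ℝ) : List (Fin n) → ℝ
  | x :: y :: L => φ x y + pcost φ (y :: L)
  | _ => 0

lemma pcost_eq (φ : Fin n → Fin n → ℝ) : ∀ (a : Fin n) (L : List (Fin n)),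
    pcost φ (a :: L) = (((a :: L).zip L).map fun p => φ p.1 p.2).sum
  | _, [] => by simp [pcost]
  | a, v :: L => by
    rw [pcost, pcost_eq φ v L]
    simp [List.zip]

lemma pcost_nonneg (φ : Fin n → Fin n → ℝ) (hφ : ∀ x y, 0 ≤ φ x y) :
    ∀ L : List (Fin n), 0 ≤ pcost φ L
  | [] => le_refl _
  | [_] => le_refl _
  | x :: y :: L => by
    rw [pcost]
    exact add_nonneg (hφ x y) (pcost_nonneg φ hφ (y :: L))

lemma pcost_suffix (φ : Fin n → Fin n → ℝ) (hφ : ∀ x y, 0 ≤ φ x y) (M : List (Fin n)) :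
    ∀ P : List (Fin n), pcost φ M ≤ pcost φ (P ++ M)
  | [] => le_refl _
  | [x] => by
    cases M with
    | nil => simp [pcost]
    | cons m M => exact le_add_of_nonneg_left (hφ x m)
  | x :: y :: P => by
    have h := pcost_suffix φ hφ M (y :: P)
    calc pcost φ M ≤ pcost φ (y :: P ++ M) := h
    _ ≤ φ x y + pcost φ (y :: P ++ M) := le_add_of_nonneg_left (hφ x y)
    _ = pcost φ (x :: y :: P ++ M) := by
        cases P <;> cases M <;> simp [pcost]

/-- Any path can be replaced by a nodup path with the same endpoints and no larger cost. -/
lemma reduce (φ : Fin n → Fin n → ℝ) (hφ : ∀ x y, 0 ≤ φ x y) (b : Fin n) :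
    ∀ (L : List (Fin n)) (a : Fin n), (a :: L).getLast (by simp) = b →
      ∃ L' : List (Fin n), (a :: L').getLast (by simp) = b ∧ (a :: L').Nodup ∧
        pcost φ (a :: L') ≤ pcost φ (a :: L)
  | [], a, h => ⟨[], h, by simp, le_refl _⟩
  | v :: L, a, h => by
    have h' : (v :: L).getLast (by simp) = b := by
      rw [← h]; exact (List.getLast_cons (by simp)).symm
    obtain ⟨L'', h1, h2, h3⟩ := reduce φ hφ b L v h'
    by_cases ha : a ∈ v :: L''
    · obtain ⟨P, Q, hPQ⟩ := List.append_of_mem ha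
      refine ⟨Q, ?_, ?_, ?_⟩
      · have e1 : (v :: L'').getLast? = some b := by
          rw [List.getLast?_eq_getLast (l := v :: L'') (by simp), h1]
        have e2 : (v :: L'').getLast? = some ((a :: Q).getLast (by simp)) := by
          rw [hPQ, ← List.getLast?_eq_getLast (l := a :: Q) (by simp)]
          exact List.getLast?_append_of_ne_nil _ (by simp)
        rw [e1] at e2
        exact (Option.some.inj e2).symm
      · have : (a :: Q).Sublist (v :: L'') := by
          rw [hPQ]; exact List.sublist_append_right P (a :: Q)
        exact h2.sublist this
      · calc pcost φ (a :: Q) ≤ pcost φ (P ++ a :: Q) := pcost_suffix φ hφ _ P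
        _ = pcost φ (v :: L'') := by rw [hPQ]
        _ ≤ pcost φ (v :: L) := h3
        _ ≤ φ a v + pcost φ (v :: L) := le_add_of_nonneg_left (hφ a v)
        _ = pcost φ (a :: v :: L) := rfl
    · refine ⟨v :: L'', ?_, ?_, ?_⟩
      · rw [← h1]; exact List.getLast_cons (by simp)
      · exact List.nodup_cons.mpr ⟨ha, h2⟩
      · show φ a v + pcost φ (v :: L'') ≤ φ a v + pcost φ (v :: L)
        linarith

/-- Realization of a transposition along a nodup path. -/
lemma realize (φ : Fin n → Fin n → ℝ) :
    ∀ (L : List (Fin n)) (a : Fin n), (a :: L).Nodup → L ≠ [] →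
      ∃ (T : List (Fin n × Fin n)) (p : Fin n × Fin n), p ∈ (a :: L).zip L ∧
        (∀ q ∈ T, q.1 ≠ q.2) ∧
        (T.map fun q => Equiv.swap q.1 q.2).prod
          = Equiv.swap a ((a :: L).getLast (by simp)) ∧
        (T.map fun q => φ q.1 q.2).sum = 2 * pcost φ (a :: L) - φ p.1 p.2
  | [], _, _, hne => absurd rfl hne
  | [v], a, hnd, _ => by
    have hav : a ≠ v := by simp at hnd; tauto
    exact ⟨[(a, v)], (a, v), by simp, by simpa using hav, by simp, by simp [pcost]; ring⟩
  | v :: w :: L, a, hnd, _ => by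
    obtain ⟨T, p, hp, hT, hprod, hsum⟩ := realize φ (w :: L) v (List.nodup_cons.mp hnd).2 (by simp)
    have hav : a ≠ v := by
      have := (List.nodup_cons.mp hnd).1; simp at this; tauto
    set b := ((v :: w :: L).getLast (by simp)) with hb
    have hblast : ((a :: v :: w :: L).getLast (by simp)) = b :=
      List.getLast_cons (by simp)
    have hbmem : b ∈ w :: L := by
      have : b = ((w :: L).getLast (by simp)) := List.getLast_cons (by simp)
      rw [this]; exact List.getLast_mem _
    have hvb : v ≠ b := by
      have := (List.nodup_cons.mp (List.nodup_cons.mp hnd).2).1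
      intro h; exact this (h ▸ hbmem)
    have hab : a ≠ b := by
      have := (List.nodup_cons.mp hnd).1
      intro h; exact this (h ▸ List.mem_cons_of_mem v hbmem)
    refine ⟨(a, v) :: T ++ [(a, v)], p, ?_, ?_, ?_, ?_⟩
    · exact List.mem_cons_of_mem _ hp
    · intro q hq
      simp at hq
      rcases hq with h | h | h
      · rw [h]; exact hav
      · exact hT q h
      · rw [h]; exact hav
    · rw [hblast]
      simp only [List.map_cons, List.map_append, List.prod_cons, List.prod_append,
        List.map_nil, List.prod_nil, List.prod_cons, mul_one, hprod]
      rw [Equiv.swap_comm a v, Equiv.swap_comm v b]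
      exact Equiv.swap_mul_swap_mul_swap hvb.symm hab.symm
    · simp only [List.map_cons, List.map_append, List.sum_cons, List.sum_append,
        List.map_nil, List.sum_nil]
      have hq : pcost φ (a :: v :: w :: L) = φ a v + pcost φ (v :: w :: L) := rfl
      rw [hq]
      linarith

end Stmt15Aux

open Stmt15Aux in
/-- the weighted transposition distance of a single transposition `(a b)`
from the identity is at most `2 η(a,b) − φ(a',b')` for some edge `(a',b')` on a shortest
path from `a` to `b`; in particular it is at most `2 η(a,b)`. -/
theorem stmt_15 {n : ℕ} (φ : Fin n → Fin n → ℝ) (hφ : ∀ x y, 0 ≤ φ x y)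
    (hφsymm : ∀ x y, φ x y = φ y x) (a b : Fin n) (hab : a ≠ b) :
    (∃ L : List (Fin n), (a :: L).getLast (by simp) = b ∧
      (((a :: L).zip L).map fun p => φ p.1 p.2).sum = eta φ a b ∧
      ∃ p ∈ (a :: L).zip L,
        wtd φ (Equiv.swap a b) 1 ≤ 2 * eta φ a b - φ p.1 p.2) ∧
    wtd φ (Equiv.swap a b) 1 ≤ 2 * eta φ a b := by
  classical
  set S : Set ℝ := {c | ∃ L : List (Fin n), (a :: L).getLast (by simp) = b ∧
    c = (((a :: L).zip L).map fun p => φ p.1 p.2).sum} with hS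
  -- rewrite membership in terms of pcost
  have hSmem : ∀ c, c ∈ S ↔ ∃ L : List (Fin n), (a :: L).getLast (by simp) = b ∧
      c = pcost φ (a :: L) := by
    intro c
    constructor
    · rintro ⟨L, h1, h2⟩; exact ⟨L, h1, by rw [pcost_eq]; exact h2⟩
    · rintro ⟨L, h1, h2⟩; exact ⟨L, h1, by rw [← pcost_eq]; exact h2⟩
  -- the set of nodup-path costs
  set T : Set ℝ := {c | ∃ L : List (Fin n), (a :: L).getLast (by simp) = b ∧
    (a :: L).Nodup ∧ c = pcost φ (a :: L)} with hT
  have hTS : T ⊆ S := by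
    rintro c ⟨L, h1, _, h2⟩
    exact (hSmem c).mpr ⟨L, h1, h2⟩
  have hTne : T.Nonempty := by
    refine ⟨pcost φ [a, b], [b], by simp, by simp [hab], rfl⟩
  have hTfin : T.Finite := by
    have : T ⊆ (fun L : List (Fin n) => pcost φ (a :: L)) '' {L | L.length ≤ n} := by
      rintro c ⟨L, _, hnd, h2⟩
      refine ⟨L, ?_, h2.symm⟩
      have hlc := hnd.length_le_card
      rw [Fintype.card_fin] at hlc
      simp only [List.length_cons] at hlc
      simp only [Set.mem_setOf_eq]
      omega
    exact Set.Finite.subset ((List.finite_length_le (Fin n) n).image _) this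
  have hSbdd : BddBelow S := by
    refine ⟨0, ?_⟩
    rintro c hc
    obtain ⟨L, _, h2⟩ := (hSmem c).mp hc
    rw [h2]; exact pcost_nonneg φ hφ _
  have hSne : S.Nonempty := ⟨_, hTS hTne.some_mem⟩
  -- every element of S is bounded below by some element of T
  have hdom : ∀ c ∈ S, ∃ t ∈ T, t ≤ c := by
    intro c hc
    obtain ⟨L, h1, h2⟩ := (hSmem c).mp hc
    obtain ⟨L', g1, g2, g3⟩ := reduce φ hφ b L a h1
    exact ⟨pcost φ (a :: L'), ⟨L', g1, g2, rfl⟩, h2 ▸ g3⟩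
  -- sInf S = sInf T and both are attained in T
  have hInfT : sInf T ∈ T := hTne.csInf_mem hTfin
  have hEq : sInf S = sInf T := by
    apply le_antisymm
    · exact csInf_le_csInf hSbdd hTne hTS
    · apply le_csInf hSne
      intro c hc
      obtain ⟨t, ht, htc⟩ := hdom c hc
      exact le_trans (csInf_le (hSbdd.mono hTS) ht) htc
  have hetaS : eta φ a b = sInf S := rfl
  obtain ⟨L, hL1, hL2, hL3⟩ := hInfT
  -- L is a nodup shortest path
  have hLcost : pcost φ (a :: L) = eta φ a b := by rw [hetaS, hEq, ← hL3]
  have hLne : L ≠ [] := by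
    rintro rfl
    simp at hL1
    exact hab hL1
  obtain ⟨Tr, p, hp, hTr, hprod, hsum⟩ := realize φ L a hL2 hLne
  -- wtd bound
  have hwtd : wtd φ (Equiv.swap a b) 1 ≤ 2 * eta φ a b - φ p.1 p.2 := by
    have hmem : (2 * eta φ a b - φ p.1 p.2) ∈ {c | ∃ Lw : List (Fin n × Fin n),
        (∀ q ∈ Lw, q.1 ≠ q.2) ∧
        1 * (Lw.map fun q => Equiv.swap q.1 q.2).prod = Equiv.swap a b ∧
        c = (Lw.map fun q => φ q.1 q.2).sum} := by
      refine ⟨Tr, hTr, ?_, ?_⟩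
      · rw [one_mul, hprod, hL1]
      · rw [hsum, hLcost]
    apply csInf_le _ hmem
    refine ⟨0, ?_⟩
    rintro c ⟨Lw, _, _, hc⟩
    rw [hc]
    apply List.sum_nonneg
    intro x hx
    simp only [List.mem_map] at hx
    obtain ⟨q, _, hq⟩ := hx
    rw [← hq]; exact hφ q.1 q.2
  constructor
  · refine ⟨L, hL1, ?_, p, hp, hwtd⟩
    rw [← pcost_eq]; exact hLcost
  · have := hφ p.1 p.2
    linarith
end
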